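/- Let K ⊆ E ⊆ F ⊆ L be field extensions with L/K of finite transcendence degree, and suppose χ_F, χ_E ∈ ℚ[t] are polynomials with χ_F(r) = trdeg_K F_r and χ_E(r) = trdeg_K E_r for all large r, where F_r = F ∩ L_r and E_r = E ∩ L_r for an ascending exhaustive chain (L_r) of intermediate fields of L/K. If χ_F = χ_E, then F is algebraic over E. -/

import Mathlib

set_option synthInstance.maxHeartbeats 1000000

/-- The transcendence degree of `L` over `K`: the supremum of the cardinalities of
subsets of `L` that are algebraically independent over `K`. -/
noncomputable def trdeg (K L : Type*) [CommRing K] [CommRing L] [Algebra K L] : Cardinal :=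
  ⨆ s : {s : Set L // AlgebraicIndependent K ((↑) : s → L)}, Cardinal.mk s.1

/-- Any algebraically independent set bounds `trdeg` from below. -/
lemma mk_le_trdeg {K L : Type*} [CommRing K] [CommRing L] [Algebra K L]
    (s : Set L) (hs : AlgebraicIndependent K ((↑) : s → L)) :
    Cardinal.mk s ≤ trdeg K L :=
  le_ciSup (Cardinal.bddAbove_range _)
    (⟨s, hs⟩ : {t : Set L // AlgebraicIndependent K ((↑) : t → L)})

/-- An algebraically independent subset of `L` contained in an intermediate field `M`
bounds `trdeg K M` from below. -/
lemma mk_le_trdeg_inter {K L : Type*} [Field K] [Field L] [Algebra K L]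
    (M : IntermediateField K L) (t : Set L) (ht : t ⊆ (M : Set L))
    (h : AlgebraicIndependent K ((↑) : t → L)) :
    Cardinal.mk t ≤ trdeg K ↥M := by
  let f : t → ↥M := fun y => ⟨(y : L), ht y.2⟩
  have hf : Function.Injective f := by
    intro a b hab
    have h2 : ((f a : ↥M) : L) = ((f b : ↥M) : L) := congrArg Subtype.val hab
    exact Subtype.ext h2
  have hcomp : ((↑) : t → L) = (M.val : ↥M →ₐ[K] L) ∘ f := rfl
  have hif : AlgebraicIndependent K f := by
    refine AlgebraicIndependent.of_comp M.val ?_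
    rw [← hcomp]; exact h
  have : AlgebraicIndependent K ((↑) : Set.range f → ↥M) := hif.coe_range
  calc Cardinal.mk t = Cardinal.mk (Set.range f) := (Cardinal.mk_range_eq f hf).symm
    _ ≤ trdeg K ↥M := mk_le_trdeg _ this

/-- `trdeg` of an intermediate field is at most the `trdeg` of the whole field. -/
lemma trdeg_intermediate_le {K L : Type*} [Field K] [Field L] [Algebra K L]
    (M : IntermediateField K L) : trdeg K ↥M ≤ trdeg K L := by
  haveI : Nonempty {s : Set ↥M // AlgebraicIndependent K ((↑) : s → ↥M)} :=
    ⟨⟨∅, (algebraicIndependent_empty_iff K ↥M).2 (algebraMap K ↥M).injective⟩⟩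
  refine ciSup_le fun s => ?_
  have hval : Function.Injective (M.val : ↥M →ₐ[K] L) := Subtype.val_injective
  have him : AlgebraicIndependent K ((↑) : (M.val '' s.1) → L) := by
    have := s.2.map' (f := M.val) hval
    exact (algebraicIndependent_image (hval.injOn)).1 this
  have : Cardinal.mk (M.val '' s.1) = Cardinal.mk s.1 :=
    Cardinal.mk_image_eq hval
  calc Cardinal.mk s.1 = Cardinal.mk (M.val '' s.1) := this.symm
    _ ≤ trdeg K L := mk_le_trdeg _ him

/-- If `trdeg` is finite, it is attained by some algebraically independent set. -/
lemma exists_mk_eq_trdeg {K L : Type*} [Field K] [Field L] [Algebra K L]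
    (h : trdeg K L < Cardinal.aleph0) :
    ∃ s : Set L, AlgebraicIndependent K ((↑) : s → L) ∧ Cardinal.mk s = trdeg K L := by
  set n : ℕ := (trdeg K L).toNat with hn
  have hcast : (n : Cardinal) = trdeg K L := Cardinal.cast_toNat_of_lt_aleph0 h
  have hempty : AlgebraicIndependent K ((↑) : (∅ : Set L) → L) :=
    (algebraicIndependent_empty_iff K L).2 (algebraMap K L).injective
  haveI : Nonempty {s : Set L // AlgebraicIndependent K ((↑) : s → L)} :=
    ⟨⟨∅, hempty⟩⟩
  by_contra hc
  push_neg at hc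
  rcases Nat.eq_zero_or_pos n with h0 | hpos
  · have h1 : trdeg K L = 0 := by rw [← hcast, h0]; simp
    exact hc ∅ hempty (by simpa using h1.symm)
  · have hub : ∀ s : {s : Set L // AlgebraicIndependent K ((↑) : s → L)},
        Cardinal.mk s.1 ≤ ((n - 1 : ℕ) : Cardinal) := by
      intro s
      have hle : Cardinal.mk s.1 ≤ trdeg K L := mk_le_trdeg _ s.2
      have hlt : Cardinal.mk s.1 < (n : Cardinal) := by
        rw [hcast]
        exact lt_of_le_of_ne hle (hc s.1 s.2)
      have hfin : Cardinal.mk s.1 < Cardinal.aleph0 := hlt.trans_le (Cardinal.nat_lt_aleph0 n).le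
      obtain ⟨m, hm⟩ := Cardinal.lt_aleph0.1 hfin
      rw [hm] at hlt ⊢
      rw [Nat.cast_lt] at hlt
      exact_mod_cast Nat.le_sub_one_of_lt hlt
    have : trdeg K L ≤ ((n - 1 : ℕ) : Cardinal) := ciSup_le hub
    rw [← hcast] at this
    rw [Nat.cast_le] at this
    omega

/-- let `K ⊆ E ⊆ F ⊆ L` with `L/K` of finite transcendence degree,
`(L_r)` an ascending exhaustive chain of intermediate fields of `L/K`, and suppose
`χ_F, χ_E ∈ ℚ[t]` satisfy `χ_F(r) = trdeg_K (F ∩ L_r)` and `χ_E(r) = trdeg_K (E ∩ L_r)`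
for all large `r`. If `χ_F = χ_E`, then `F` is algebraic over `E`. -/
theorem stmt14 (K L : Type*) [Field K] [Field L] [Algebra K L]
    (hfin : trdeg K L < Cardinal.aleph0)
    (E F : IntermediateField K L) (hEF : E ≤ F)
    (Lr : ℕ → IntermediateField K L) (hmono : Monotone Lr)
    (hsup : (⨆ r, Lr r) = ⊤)
    (χF χE : Polynomial ℚ) (N : ℕ)
    (hF : ∀ r : ℕ, N ≤ r → χF.eval (r : ℚ) = ((trdeg K ↥(F ⊓ Lr r)).toNat : ℚ))
    (hE : ∀ r : ℕ, N ≤ r → χE.eval (r : ℚ) = ((trdeg K ↥(E ⊓ Lr r)).toNat : ℚ))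
    (heq : χF = χE) :
    ∀ x : L, x ∈ F → IsAlgebraic E x := by
  classical
  intro x hxF
  by_contra hxa
  have htransE : Transcendental E x := hxa
  -- find r ≥ N with x ∈ Lr r
  have hxtop : x ∈ ⨆ r, Lr r := hsup ▸ IntermediateField.mem_top
  have hcoe : ((⨆ r, Lr r : IntermediateField K L) : Set L) = ⋃ r, (Lr r : Set L) :=
    IntermediateField.coe_iSup_of_directed hmono.directed_le
  have : (x : L) ∈ ⋃ r, (Lr r : Set L) := hcoe ▸ hxtop
  obtain ⟨r0, hr0⟩ := Set.mem_iUnion.1 this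
  set r : ℕ := max r0 N with hr
  have hxr : x ∈ Lr r := hmono (le_max_left r0 N) hr0
  have hNr : N ≤ r := le_max_right r0 N
  -- the two trdegs are finite and equal
  have hfinE : trdeg K ↥(E ⊓ Lr r) < Cardinal.aleph0 :=
    (trdeg_intermediate_le (E ⊓ Lr r)).trans_lt hfin
  have hfinF : trdeg K ↥(F ⊓ Lr r) < Cardinal.aleph0 :=
    (trdeg_intermediate_le (F ⊓ Lr r)).trans_lt hfin
  have hEFtr : trdeg K ↥(F ⊓ Lr r) = trdeg K ↥(E ⊓ Lr r) := by
    have h1 := hF r hNr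
    have h2 := hE r hNr
    rw [heq, h2] at h1
    have h3 : (trdeg K ↥(E ⊓ Lr r)).toNat = (trdeg K ↥(F ⊓ Lr r)).toNat := by
      exact_mod_cast h1
    rw [← Cardinal.cast_toNat_of_lt_aleph0 hfinF, ← Cardinal.cast_toNat_of_lt_aleph0 hfinE, h3]
  -- pick a maximal algebraically independent set in E ⊓ Lr r
  obtain ⟨s', hs', hmk'⟩ := exists_mk_eq_trdeg hfinE
  set s : Set L := (E ⊓ Lr r).val '' s' with hs_def
  have hval : Function.Injective ((E ⊓ Lr r).val : ↥(E ⊓ Lr r) →ₐ[K] L) :=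
    Subtype.val_injective
  have hs_indep : AlgebraicIndependent K ((↑) : s → L) :=
    (algebraicIndependent_image hval.injOn).1 (hs'.map' (f := (E ⊓ Lr r).val) hval)
  have hmks : Cardinal.mk s = trdeg K ↥(E ⊓ Lr r) := by
    rw [hs_def, Cardinal.mk_image_eq hval, hmk']
  have hsE : s ⊆ (E : Set L) := by
    rintro y ⟨z, _, rfl⟩
    exact z.2.1
  have hsFL : s ⊆ ((F ⊓ Lr r : IntermediateField K L) : Set L) := by
    rintro y ⟨z, _, rfl⟩
    exact ⟨hEF z.2.1, z.2.2⟩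
  -- x is transcendental over adjoin K s
  have hadle : Algebra.adjoin K s ≤ E.toSubalgebra :=
    Algebra.adjoin_le hsE
  have htrans_adjE : Transcendental E.toSubalgebra x := htransE
  have htrans : Transcendental (Algebra.adjoin K s) x :=
    htrans_adjE.of_tower_top_of_subalgebra_le hadle
  -- x ∉ s
  have hxs : x ∉ s := by
    intro hxn
    exact htransE (isAlgebraic_algebraMap (⟨x, hsE hxn⟩ : E))
  -- insert x s is algebraically independent
  have ho : AlgebraicIndependent K (fun o : Option s => o.elim x ((↑) : s → L)) := by
    refine (hs_indep.option_iff_transcendental x).2 ?_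
    rwa [Subtype.range_coe]
  have hins : AlgebraicIndependent K ((↑) : ↥(insert x s) → L) := by
    convert ho.comp _ (Set.subtypeInsertEquivOption hxs).injective
    ext y
    by_cases h : (y : L) = x <;> simp [h, Set.subtypeInsertEquivOption]
  have hinsF : (insert x s : Set L) ⊆ ((F ⊓ Lr r : IntermediateField K L) : Set L) := by
    rintro y (rfl | hy)
    · exact ⟨hxF, hxr⟩
    · exact hsFL hy
  have hgeF : Cardinal.mk ↥(insert x s) ≤ trdeg K ↥(F ⊓ Lr r) :=
    mk_le_trdeg_inter _ _ hinsF hins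
  have hmkins : Cardinal.mk ↥(insert x s) = Cardinal.mk s + 1 :=
    Cardinal.mk_insert hxs
  -- contradiction
  have hcontra : trdeg K ↥(E ⊓ Lr r) + 1 ≤ trdeg K ↥(E ⊓ Lr r) := by
    calc trdeg K ↥(E ⊓ Lr r) + 1 = Cardinal.mk ↥(insert x s) := by
          rw [hmkins, hmks]
      _ ≤ trdeg K ↥(F ⊓ Lr r) := hgeF
      _ = trdeg K ↥(E ⊓ Lr r) := hEFtr
  obtain ⟨m, hm⟩ := Cardinal.lt_aleph0.1 hfinE
  rw [hm] at hcontra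
  have : (m + 1 : ℕ) ≤ (m : ℕ) := by exact_mod_cast hcontra
  omega
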